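/- Let {A, S, Π} be an S-node on the complex Hilbert space H such that S ≥ εI for some ε > 0. Let K ⊆ H be a closed subspace with orthogonal projection P : H → H onto K, and suppose PA(I − P) = 0. Define the compressed operators on K: A_K ξ := P(Aξ), S_K ξ := P(Sξ) for ξ ∈ K, and Φ₂ᴷ := P∘Φ₂ : ℂ^p → K (so that S_K ≥ εI on K and hence is invertible). Fix z in the open upper half-plane such that I − z̄A is boundedly invertible on H and I − z̄A_K is boundedly invertible on K. Then the p×p matrix ρ_H(z, z̄) − ρ_K(z, z̄) is positive semidefinite, where ρ_H(z, z̄) := i(z̄ − z)Φ₂*(I − zA*)^{−1}S^{−1}(I − z̄A)^{−1}Φ₂ and ρ_K(z, z̄) := i(z̄ − z)(Φ₂ᴷ)*(I − zA_K*)^{−1}S_K^{−1}(I − z̄A_K)^{−1}Φ₂ᴷ. -/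

import Mathlib

open Matrix MeasureTheory ContinuousLinearMap
open scoped ComplexOrder

noncomputable section

/-- The matrix (in the standard basis) of a continuous linear operator on `ℂ^p`. -/
def opToMat {p : ℕ} (T : EuclideanSpace ℂ (Fin p) →L[ℂ] EuclideanSpace ℂ (Fin p)) :
    Matrix (Fin p) (Fin p) ℂ :=
  (Matrix.toEuclideanCLM (𝕜 := ℂ) (n := Fin p)).symm T


section Aux
set_option linter.unusedSectionVars false
variable {E : Type*} [NormedAddCommGroup E] [InnerProductSpace ℂ E] [CompleteSpace E]

lemma coercive_norm_le {S : E →L[ℂ] E} {ε : ℝ}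
    (h : ∀ f, ε * ‖f‖ ^ 2 ≤ (inner ℂ (S f) f : ℂ).re) (f : E) : ε * ‖f‖ ≤ ‖S f‖ := by
  rcases eq_or_ne f 0 with rfl | hf
  · simp
  · have h1 := h f
    have h2 : (inner ℂ (S f) f : ℂ).re ≤ ‖S f‖ * ‖f‖ := by
      calc (inner ℂ (S f) f : ℂ).re ≤ ‖inner ℂ (S f) f‖ := Complex.re_le_norm _
        _ ≤ ‖S f‖ * ‖f‖ := by
            exact norm_inner_le_norm _ _
    have h3 : 0 < ‖f‖ := norm_pos_iff.2 hf
    nlinarith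

lemma isUnit_of_coercive {S : E →L[ℂ] E} {ε : ℝ} (hε : 0 < ε)
    (h : ∀ f, ε * ‖f‖ ^ 2 ≤ (inner ℂ (S f) f : ℂ).re) : IsUnit S := by
  rw [ContinuousLinearMap.isUnit_iff_bijective]
  have hb := coercive_norm_le h
  have hinj : Function.Injective S := by
    intro a b hab
    have h1 := hb (a - b)
    rw [map_sub, hab, sub_self, norm_zero] at h1
    have h2 : ‖a - b‖ ≤ 0 := by nlinarith [norm_nonneg (a - b)]
    have h3 : a - b = 0 := norm_le_zero_iff.1 h2
    exact sub_eq_zero.1 h3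
  refine ⟨hinj, ?_⟩
  have hanti : AntilipschitzWith (⟨ε⁻¹, by positivity⟩ : NNReal) S := by
    apply ContinuousLinearMap.antilipschitz_of_bound
    intro x
    have := hb x
    change ‖x‖ ≤ ε⁻¹ * ‖S x‖
    rw [inv_mul_eq_div, le_div_iff₀ hε]
    linarith
  have hclosed : IsClosed ((LinearMap.range (S : E →ₗ[ℂ] E) : Submodule ℂ E) : Set E) := by
    rw [LinearMap.coe_range]; exact hanti.isClosed_range S.uniformContinuous
  set V : Submodule ℂ E := LinearMap.range (S : E →ₗ[ℂ] E) with hVdef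
  haveI : CompleteSpace V := hclosed.completeSpace_coe
  have hV : Vᗮ = ⊥ := by
    rw [Submodule.eq_bot_iff]
    intro x hx
    have h0 : (inner ℂ (S x) x : ℂ) = 0 :=
      (Submodule.mem_orthogonal V x).1 hx (S x) (LinearMap.mem_range_self _ x)
    have h1 := h x
    rw [h0] at h1
    simp only [Complex.zero_re] at h1
    have h2 : ‖x‖ ^ 2 ≤ 0 := by
      have := le_of_mul_le_mul_left (by linarith : ε * ‖x‖ ^ 2 ≤ ε * 0) hε
      linarith
    have h3 : ‖x‖ = 0 := by nlinarith [sq_nonneg ‖x‖, norm_nonneg x]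
    exact norm_eq_zero.1 h3
  have hVtop : V = ⊤ := Submodule.orthogonal_eq_bot_iff.1 hV
  intro y
  have : y ∈ V := hVtop ▸ Submodule.mem_top
  exact this

lemma inverse_isPositive {S : E →L[ℂ] E} (hS : IsSelfAdjoint S) {ε : ℝ} (hε : 0 < ε)
    (h : ∀ f, ε * ‖f‖ ^ 2 ≤ (inner ℂ (S f) f : ℂ).re) : (Ring.inverse S).IsPositive := by
  have hU := isUnit_of_coercive hε h
  constructor
  · refine ContinuousLinearMap.isSelfAdjoint_iff_isSymmetric.mp ?_
    rw [_root_.IsSelfAdjoint, ← Ring.inverse_star, hS.star_eq]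
  · intro x
    rw [ContinuousLinearMap.reApplyInnerSelf_apply]
    set y := Ring.inverse S x with hy
    have hx : S y = x := by
      have := Ring.mul_inverse_cancel S hU
      calc S y = (S * Ring.inverse S) x := rfl
        _ = x := by rw [this]; rfl
    have h1 : (inner ℂ (y : E) x : ℂ).re = (inner ℂ (S y) y : ℂ).re := by
      rw [← hx, ← inner_conj_symm]
      exact (Complex.conj_re _)
    have := h y
    have h2 : (0:ℝ) ≤ ε * ‖y‖ ^ 2 := by positivity
    have h3 : RCLike.re (inner ℂ (y : E) x : ℂ) = (inner ℂ (y : E) x : ℂ).re := rfl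
    rw [h3, h1]
    linarith

lemma isPositive_smul_real {T : E →L[ℂ] E} (hT : T.IsPositive) {r : ℝ} (hr : 0 ≤ r) :
    (((r : ℂ)) • T).IsPositive := by
  constructor
  · refine ContinuousLinearMap.isSelfAdjoint_iff_isSymmetric.mp ?_
    rw [_root_.IsSelfAdjoint, star_smul, Complex.star_def, Complex.conj_ofReal, hT.isSelfAdjoint.star_eq]
  · intro x
    have h1 : (((r : ℂ)) • T).reApplyInnerSelf x = r * T.reApplyInnerSelf x := by
      rw [ContinuousLinearMap.reApplyInnerSelf_apply, ContinuousLinearMap.reApplyInnerSelf_apply,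
        ContinuousLinearMap.smul_apply, inner_smul_left, Complex.conj_ofReal]
      exact Complex.re_ofReal_mul r _
    rw [h1]
    exact mul_nonneg hr (hT.2 x)


set_option synthInstance.maxHeartbeats 400000 in
lemma posSemidef_opToMat {p : ℕ} {T : EuclideanSpace ℂ (Fin p) →L[ℂ] EuclideanSpace ℂ (Fin p)}
    (hT : T.IsPositive) : (opToMat T).PosSemidef := by
  have hsym := ContinuousLinearMap.isSelfAdjoint_iff_isSymmetric.mp hT.isSelfAdjoint
  rw [Matrix.posSemidef_iff_dotProduct_mulVec]
  constructor
  · rw [Matrix.IsHermitian, ← Matrix.star_eq_conjTranspose, opToMat, ← map_star, hT.isSelfAdjoint.star_eq]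
  · intro x
    set v : EuclideanSpace ℂ (Fin p) := (WithLp.equiv 2 _).symm x with hv
    have key : Matrix.toEuclideanCLM (𝕜 := ℂ) (opToMat T) = T :=
      StarAlgEquiv.apply_symm_apply _ T
    have hMv : (opToMat T) *ᵥ x = WithLp.equiv 2 _ (T v) := by
      have h1 := Matrix.ofLp_toEuclideanCLM (𝕜 := ℂ) (opToMat T) v
      rw [key] at h1
      change _ = WithLp.ofLp (T v)
      rw [h1]; rfl
    have hdot : dotProduct (star x) ((opToMat T) *ᵥ x) = (inner ℂ v (T v) : ℂ) := by
      rw [hMv, EuclideanSpace.inner_eq_star_dotProduct, dotProduct_comm]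
      rfl
    rw [hdot]
    have hTv : (inner ℂ (T v) v : ℂ) = inner ℂ v (T v) := hsym v v
    have him : (inner ℂ v (T v) : ℂ).im = 0 := by
      rw [← Complex.conj_eq_iff_im]
      exact (inner_conj_symm _ _).trans hTv
    have hre : 0 ≤ (inner ℂ v (T v) : ℂ).re := by
      have h0 := hT.re_inner_nonneg_left v
      have : RCLike.re (inner ℂ (T v) v : ℂ) = (inner ℂ (T v) v : ℂ).re := rfl
      rw [this] at h0
      rwa [← hTv]
    rw [Complex.le_def]
    exact ⟨hre, him.symm⟩

lemma key_ineq {S : E →L[ℂ] E} (hS : IsSelfAdjoint S) {ε : ℝ} (hε : 0 < ε)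
    (h : ∀ f, ε * ‖f‖ ^ 2 ≤ (inner ℂ (S f) f : ℂ).re)
    (K : Submodule ℂ E) [CompleteSpace K] (x : E) :
    (inner ℂ ((Ring.inverse (K.orthogonalProjection ∘L S ∘L K.subtypeL))
        (K.orthogonalProjection x)) (K.orthogonalProjection x) : ℂ).re ≤
      (inner ℂ (Ring.inverse S x) x : ℂ).re := by
  set Q := K.orthogonalProjection with hQ
  set ι := K.subtypeL with hι
  set SK := Q ∘L S ∘L ι with hSKdef
  have hiota : ∀ (a : E) (b : K), (inner ℂ a (ι b) : ℂ) = inner ℂ (Q a) b := by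
    intro a b
    rw [show Q a = (ContinuousLinearMap.adjoint ι) a by rw [hι, Submodule.adjoint_subtypeL]]
    exact (ContinuousLinearMap.adjoint_inner_left ι b a).symm
  have hSKcoer : ∀ f : K, ε * ‖f‖ ^ 2 ≤ (inner ℂ (SK f) f : ℂ).re := by
    intro f
    have h1 : (inner ℂ (SK f) f : ℂ) = inner ℂ (S (ι f)) (ι f) :=
      (hiota (S (ι f)) f).symm
    rw [h1]
    have h2 : ‖ι f‖ = ‖f‖ := rfl
    have := h (ι f)
    rwa [h2] at this
  have hUS := isUnit_of_coercive hε h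
  have hUSK := isUnit_of_coercive hε hSKcoer
  set u := Ring.inverse S x with hu
  set w := Ring.inverse SK (Q x) with hw
  have hSu : S u = x := by
    calc S u = (S * Ring.inverse S) x := rfl
      _ = x := by rw [Ring.mul_inverse_cancel S hUS]; rfl
  have hSKw : SK w = Q x := by
    calc SK w = (SK * Ring.inverse SK) (Q x) := rfl
      _ = Q x := by rw [Ring.mul_inverse_cancel SK hUSK]; rfl
  have hsym : ∀ a b : E, (inner ℂ (S a) b : ℂ) = inner ℂ a (S b) :=
    fun a b => ContinuousLinearMap.isSelfAdjoint_iff_isSymmetric.mp hS a b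
  have h0 : (0:ℝ) ≤ (inner ℂ (S (ι w - u)) (ι w - u) : ℂ).re :=
    le_trans (by positivity) (h _)
  have hexp : (inner ℂ (S (ι w - u)) (ι w - u) : ℂ)
      = inner ℂ (S (ι w)) (ι w) - inner ℂ (S (ι w)) u - inner ℂ (S u) (ι w) + inner ℂ (S u) u := by
    rw [map_sub, inner_sub_left, inner_sub_right, inner_sub_right]; ring
  have ha : (inner ℂ (S (ι w)) (ι w) : ℂ) = inner ℂ (Q x) w := by
    rw [hiota, show Q (S (ι w)) = SK w from rfl, hSKw]
  have hc : (inner ℂ (S u) (ι w) : ℂ) = inner ℂ (Q x) w := by rw [hSu, hiota]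
  have hb2 : (inner ℂ (S u) u : ℂ) = inner ℂ x u := by rw [hSu]
  have hd : (inner ℂ (S (ι w)) u : ℂ).re = (inner ℂ (Q x) w : ℂ).re := by
    rw [hsym, hSu, ← inner_conj_symm, Complex.conj_re, hiota]
  rw [hexp, Complex.add_re, Complex.sub_re, Complex.sub_re, ha, hc, hb2, hd] at h0
  have hg1 : (inner ℂ (w : K) (Q x) : ℂ).re = (inner ℂ (Q x) w : ℂ).re := by
    rw [← inner_conj_symm, Complex.conj_re]
  have hg2 : (inner ℂ (u : E) x : ℂ).re = (inner ℂ x u : ℂ).re := by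
    rw [← inner_conj_symm, Complex.conj_re]
  rw [hg1, hg2]
  linarith

lemma ring_inverse_adjoint {T : E →L[ℂ] E} (hT : IsUnit T) :
    Ring.inverse (ContinuousLinearMap.adjoint T)
      = ContinuousLinearMap.adjoint (Ring.inverse T) := by
  have hone : ContinuousLinearMap.adjoint (1 : E →L[ℂ] E) = 1 := by
    have h := star_one (E →L[ℂ] E)
    rwa [ContinuousLinearMap.star_eq_adjoint] at h
  have h1 : ContinuousLinearMap.adjoint T * ContinuousLinearMap.adjoint (Ring.inverse T) = 1 := by
    rw [ContinuousLinearMap.mul_def, ← ContinuousLinearMap.adjoint_comp,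
      ← ContinuousLinearMap.mul_def, Ring.inverse_mul_cancel T hT, hone]
  have h2 : ContinuousLinearMap.adjoint (Ring.inverse T) * ContinuousLinearMap.adjoint T = 1 := by
    rw [ContinuousLinearMap.mul_def, ← ContinuousLinearMap.adjoint_comp,
      ← ContinuousLinearMap.mul_def, Ring.mul_inverse_cancel T hT, hone]
  exact Ring.inverse_unit ⟨ContinuousLinearMap.adjoint T,
    ContinuousLinearMap.adjoint (Ring.inverse T), h1, h2⟩

end Aux

/-- The `2p × 2p` matrix `Π^* B Π` with blocks `Φ_i^* B Φ_j`, for `Π = [Φ₁ Φ₂]`. -/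
def sandwich {p : ℕ} {H : Type*} [NormedAddCommGroup H] [InnerProductSpace ℂ H]
    [CompleteSpace H] (B : H →L[ℂ] H) (Φ₁ Φ₂ : EuclideanSpace ℂ (Fin p) →L[ℂ] H) :
    Matrix (Fin p ⊕ Fin p) (Fin p ⊕ Fin p) ℂ :=
  Matrix.fromBlocks
    (opToMat (adjoint Φ₁ ∘L B ∘L Φ₁)) (opToMat (adjoint Φ₁ ∘L B ∘L Φ₂))
    (opToMat (adjoint Φ₂ ∘L B ∘L Φ₁)) (opToMat (adjoint Φ₂ ∘L B ∘L Φ₂))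

/-- The frame `𝔄(S,z) = I_{2p} - i z Π^* (I - z A^*)⁻¹ S⁻¹ Π J` of an `S`-node,
identified with a `2p × 2p` complex matrix. -/
def frameS {p : ℕ} {H : Type*} [NormedAddCommGroup H] [InnerProductSpace ℂ H]
    [CompleteSpace H] (A S : H →L[ℂ] H) (Φ₁ Φ₂ : EuclideanSpace ℂ (Fin p) →L[ℂ] H)
    (z : ℂ) : Matrix (Fin p ⊕ Fin p) (Fin p ⊕ Fin p) ℂ :=
  1 - (Complex.I * z) •
    (sandwich (Ring.inverse (1 - z • adjoint A) ∘L Ring.inverse S) Φ₁ Φ₂ *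
      Matrix.fromBlocks 0 1 1 0)

/-- The `p × p` matrix `ρ(z,w) = i (w - z) Φ₂^* (I - z A^*)⁻¹ S⁻¹ (I - w A)⁻¹ Φ₂`. -/
def rhoS {p : ℕ} {H : Type*} [NormedAddCommGroup H] [InnerProductSpace ℂ H]
    [CompleteSpace H] (A S : H →L[ℂ] H) (Φ₂ : EuclideanSpace ℂ (Fin p) →L[ℂ] H)
    (z w : ℂ) : Matrix (Fin p) (Fin p) ℂ :=
  (Complex.I * (w - z)) • opToMat (adjoint Φ₂ ∘L Ring.inverse (1 - z • adjoint A) ∘L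
    Ring.inverse S ∘L Ring.inverse (1 - w • A) ∘L Φ₂)

set_option maxHeartbeats 1000000
set_option synthInstance.maxHeartbeats 1000000

/-- monotonicity of `ρ(z, conj z)` under compression of the `S`-node to an
invariant-type closed subspace: `ρ_H(z, conj z) - ρ_K(z, conj z) ≥ 0`. -/
theorem rho_monotone_under_compression
    {p : ℕ} (hp : 1 ≤ p) {H : Type*} [NormedAddCommGroup H] [InnerProductSpace ℂ H]
    [CompleteSpace H] (A S : H →L[ℂ] H) (Φ₁ Φ₂ : EuclideanSpace ℂ (Fin p) →L[ℂ] H)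
    (hS : IsSelfAdjoint S)
    (hnode : A ∘L S - S ∘L adjoint A =
      Complex.I • (Φ₁ ∘L adjoint Φ₂ + Φ₂ ∘L adjoint Φ₁))
    (ε : ℝ) (hε : 0 < ε)
    (hSpos : ∀ f : H, ε * ‖f‖ ^ 2 ≤ (inner ℂ (S f) f : ℂ).re)
    (K : Submodule ℂ H) [CompleteSpace K]
    (hPA : (K.subtypeL ∘L K.orthogonalProjection) ∘L A ∘L
      (1 - K.subtypeL ∘L K.orthogonalProjection) = 0)
    (z : ℂ) (hz : 0 < z.im)
    (hinv : IsUnit ((1 : H →L[ℂ] H) - (starRingEnd ℂ z) • A))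
    (hinvK : IsUnit ((1 : K →L[ℂ] K) -
      (starRingEnd ℂ z) • (K.orthogonalProjection ∘L A ∘L K.subtypeL))) :
    (rhoS A S Φ₂ z (starRingEnd ℂ z) -
      rhoS (K.orthogonalProjection ∘L A ∘L K.subtypeL)
        (K.orthogonalProjection ∘L S ∘L K.subtypeL)
        (K.orthogonalProjection ∘L Φ₂) z (starRingEnd ℂ z)).PosSemidef := by
  classical
  set Q := K.orthogonalProjection with hQ
  set ι := K.subtypeL with hι
  set AK := Q ∘L A ∘L ι with hAKdef
  set SK := Q ∘L S ∘L ι with hSKdef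
  set ΦK := Q ∘L Φ₂ with hΦKdef
  set zb := starRingEnd ℂ z with hzb
  set M := (1 : H →L[ℂ] H) - zb • A with hM
  set MK := (1 : K →L[ℂ] K) - zb • AK with hMK
  -- basic facts about the projection
  have hiota : ∀ (a : H) (b : K), (inner ℂ a (ι b) : ℂ) = inner ℂ (Q a) b := by
    intro a b
    rw [show Q a = (ContinuousLinearMap.adjoint ι) a by rw [hι, Submodule.adjoint_subtypeL]]
    exact (ContinuousLinearMap.adjoint_inner_left ι b a).symm
  -- the compressed S is coercive and self-adjoint
  have hSKcoer : ∀ f : K, ε * ‖f‖ ^ 2 ≤ (inner ℂ (SK f) f : ℂ).re := by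
    intro f
    have h1 : (inner ℂ (SK f) f : ℂ) = inner ℂ (S (ι f)) (ι f) := (hiota (S (ι f)) f).symm
    rw [h1]
    have h2 : ‖ι f‖ = ‖f‖ := rfl
    have := hSpos (ι f)
    rwa [h2] at this
  have hSKsa : IsSelfAdjoint SK := by
    rw [_root_.IsSelfAdjoint, ContinuousLinearMap.star_eq_adjoint, hSKdef,
      ContinuousLinearMap.adjoint_comp, ContinuousLinearMap.adjoint_comp,
      Submodule.adjoint_orthogonalProjection, hι, Submodule.adjoint_subtypeL, hS.adjoint_eq]
    rfl
  -- the invariance property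
  have hQA0 : ∀ x : H, Q (A (ι (Q x))) = Q (A x) := by
    intro x
    have h1 := ContinuousLinearMap.ext_iff.1 hPA x
    simp only [ContinuousLinearMap.comp_apply, ContinuousLinearMap.sub_apply,
      ContinuousLinearMap.one_apply, ContinuousLinearMap.zero_apply, map_sub] at h1
    have h2 : Q (A x) - Q (A (ι (Q x))) = 0 := by
      have h3 : ι (Q (A x) - Q (A (ι (Q x)))) = 0 := by
        rw [map_sub]; exact h1
      exact Submodule.coe_eq_zero.1 h3
    rw [sub_eq_zero] at h2
    exact h2.symm
  have hMKQ : ∀ x : H, MK (Q x) = Q (M x) := by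
    intro x
    simp only [hMK, hM, ContinuousLinearMap.sub_apply, ContinuousLinearMap.one_apply,
      ContinuousLinearMap.smul_apply, hAKdef, ContinuousLinearMap.comp_apply, map_sub, _root_.map_smul]
    rw [hQA0 x]
  have hinvMapply : ∀ x, M (Ring.inverse M x) = x := fun x => by
    calc M (Ring.inverse M x) = (M * Ring.inverse M) x := rfl
      _ = x := by rw [Ring.mul_inverse_cancel M hinv]; rfl
  have hinvMKapply : ∀ y : K, Ring.inverse MK (MK y) = y := fun y => by
    calc Ring.inverse MK (MK y) = (Ring.inverse MK * MK) y := rfl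
      _ = y := by rw [Ring.inverse_mul_cancel MK hinvK]; rfl
  have hcomm : ∀ x : H, Q (Ring.inverse M x) = Ring.inverse MK (Q x) := by
    intro x
    have h1 : MK (Q (Ring.inverse M x)) = Q x := by rw [hMKQ, hinvMapply]
    have h2 := hinvMKapply (Q (Ring.inverse M x))
    rw [h1] at h2
    exact h2.symm
  -- adjoints
  have hadjM : (1 : H →L[ℂ] H) - z • ContinuousLinearMap.adjoint A = ContinuousLinearMap.adjoint M := by
    rw [hM, hzb]
    have h := star_sub (R := H →L[ℂ] H) 1 ((starRingEnd ℂ z) • A)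
    rw [star_smul, star_one, ContinuousLinearMap.star_eq_adjoint,
      ContinuousLinearMap.star_eq_adjoint, Complex.star_def, Complex.conj_conj] at h
    rw [← h]
  have hadjMK : (1 : K →L[ℂ] K) - z • ContinuousLinearMap.adjoint AK = ContinuousLinearMap.adjoint MK := by
    rw [hMK, hzb]
    have h := star_sub (R := (K : Submodule ℂ H) →L[ℂ] (K : Submodule ℂ H)) 1
      ((starRingEnd ℂ z) • AK)
    rw [star_smul, star_one, ContinuousLinearMap.star_eq_adjoint,
      ContinuousLinearMap.star_eq_adjoint, Complex.star_def, Complex.conj_conj] at h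
    rw [← h]
  have hinvadjM : Ring.inverse ((1 : H →L[ℂ] H) - z • ContinuousLinearMap.adjoint A)
      = ContinuousLinearMap.adjoint (Ring.inverse M) := by
    rw [hadjM, ring_inverse_adjoint hinv]
  have hinvadjMK : Ring.inverse ((1 : K →L[ℂ] K) - z • ContinuousLinearMap.adjoint AK)
      = ContinuousLinearMap.adjoint (Ring.inverse MK) := by
    rw [hadjMK, ring_inverse_adjoint hinvK]
  set B := Ring.inverse M ∘L Φ₂ with hB
  set C := Ring.inverse MK ∘L ΦK with hC
  have hCB : ∀ v, C v = Q (B v) := fun v => by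
    rw [hB, hC]
    simp only [ContinuousLinearMap.comp_apply, hΦKdef]
    exact (hcomm (Φ₂ v)).symm
  -- positivity of the operator difference
  have hRS := inverse_isPositive hS hε hSpos
  have hRSK := inverse_isPositive hSKsa hε hSKcoer
  have hT1 : (ContinuousLinearMap.adjoint B ∘L Ring.inverse S ∘L B).IsPositive :=
    hRS.adjoint_conj B
  have hT2 : (ContinuousLinearMap.adjoint C ∘L Ring.inverse SK ∘L C).IsPositive :=
    hRSK.adjoint_conj C
  set T := ContinuousLinearMap.adjoint B ∘L Ring.inverse S ∘L B
    - ContinuousLinearMap.adjoint C ∘L Ring.inverse SK ∘L C with hT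
  have hTpos : T.IsPositive := by
    constructor
    · exact ContinuousLinearMap.isSelfAdjoint_iff_isSymmetric.mp
        (hT1.isSelfAdjoint.sub hT2.isSelfAdjoint)
    · intro v
      rw [ContinuousLinearMap.reApplyInnerSelf_apply, hT, ContinuousLinearMap.sub_apply,
        inner_sub_left]
      have e1 : (inner ℂ ((ContinuousLinearMap.adjoint B ∘L Ring.inverse S ∘L B) v) v : ℂ)
          = inner ℂ (Ring.inverse S (B v)) (B v) := by
        simp only [ContinuousLinearMap.comp_apply]
        exact ContinuousLinearMap.adjoint_inner_left B v _
      have e2 : (inner ℂ ((ContinuousLinearMap.adjoint C ∘L Ring.inverse SK ∘L C) v) v : ℂ)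
          = inner ℂ (Ring.inverse SK (Q (B v))) (Q (B v)) := by
        simp only [ContinuousLinearMap.comp_apply]
        rw [ContinuousLinearMap.adjoint_inner_left C v (Ring.inverse SK (C v)), hCB v]
      have hk := key_ineq hS hε hSpos K (B v)
      rw [e1, e2]
      have hre : RCLike.re ((inner ℂ (Ring.inverse S (B v)) (B v) : ℂ)
          - (inner ℂ (Ring.inverse SK (Q (B v))) (Q (B v)) : ℂ))
          = ((inner ℂ (Ring.inverse S (B v)) (B v) : ℂ)
          - (inner ℂ (Ring.inverse SK (Q (B v))) (Q (B v)) : ℂ)).re := rfl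
      rw [hre, Complex.sub_re]
      simp only [← hQ, ← hι, ← hSKdef] at hk
      linarith [hk]
  -- scalar computation
  have hcval : Complex.I * (zb - z) = ((2 * z.im : ℝ) : ℂ) := by
    rw [hzb]
    apply Complex.ext <;>
      simp [Complex.mul_re, Complex.mul_im, Complex.sub_re, Complex.sub_im] <;> ring
  have hTpos' : ((((2 * z.im : ℝ)) : ℂ) • T).IsPositive :=
    isPositive_smul_real hTpos (by linarith)
  -- assemble the matrix identity
  have hOP1 : ContinuousLinearMap.adjoint Φ₂ ∘L
        Ring.inverse ((1 : H →L[ℂ] H) - z • ContinuousLinearMap.adjoint A) ∘L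
        Ring.inverse S ∘L Ring.inverse M ∘L Φ₂
      = ContinuousLinearMap.adjoint B ∘L Ring.inverse S ∘L B := by
    rw [hinvadjM, hB, ContinuousLinearMap.adjoint_comp (Ring.inverse M) Φ₂]
    rfl
  have hOP2 : ContinuousLinearMap.adjoint ΦK ∘L
        Ring.inverse ((1 : K →L[ℂ] K) - z • ContinuousLinearMap.adjoint AK) ∘L
        Ring.inverse SK ∘L Ring.inverse MK ∘L ΦK
      = ContinuousLinearMap.adjoint C ∘L Ring.inverse SK ∘L C := by
    rw [hinvadjMK, hC, ContinuousLinearMap.adjoint_comp (Ring.inverse MK) ΦK]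
    rfl
  have hmat : rhoS A S Φ₂ z zb - rhoS AK SK ΦK z zb
      = opToMat ((((2 * z.im : ℝ)) : ℂ) • T) := by
    simp only [rhoS, ← hM, ← hMK, hOP1, hOP2, hcval]
    rw [← smul_sub, hT]
    simp only [opToMat, ← map_sub]
    rw [← _root_.map_smul]
  rw [hmat]
  exact posSemidef_opToMat hTpos'


end
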